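/- Let Θ ⊂ ℝ^d be a compact set and (Ω, F, P) a probability space. Let {f_θ : ℝ^∞ → [−∞, ∞], θ ∈ Θ} be a family of Borel measurable functions such that (i) θ ↦ f_θ(x) is upper-semicontinuous for every x ∈ ℝ^∞, (ii) sup_{θ ∈ C} f_θ(x) is Borel measurable for every compact C ⊂ Θ, and (iii) E{sup_{θ∈Θ} f_θ(X)} < ∞ for some random variable X on (Ω,F,P). Then (a) the map θ ↦ E[f_θ(X)] is upper-semicontinuous, and (b) if {X_t : Ω → ℝ^∞, t ∈ ℤ} is an ergodic stationary process on (Ω,F,P) with each X_t distributed as X, then for every compact set C ⊂ Θ, limsup_{n→∞} sup_{θ∈C} (1/n) Σ_{i=1}^n f_θ(X_i) ≤ sup_{θ∈C} E{f_θ(X_1)} almost surely. -/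

import Mathlib

open MeasureTheory Filter

/-- The positive part of an extended real number, as an extended nonnegative real. -/
noncomputable def erealPos (x : EReal) : ENNReal :=
  if x = ⊤ then ⊤ else ENNReal.ofReal x.toReal

/-- The expectation, in the extended sense, of an `EReal`-valued function. -/
noncomputable def eIntegral {Ω : Type*} [MeasurableSpace Ω] (P : Measure Ω)
    (g : Ω → EReal) : EReal :=
  ((∫⁻ ω, erealPos (g ω) ∂P : ENNReal) : EReal) - ((∫⁻ ω, erealPos (-g ω) ∂P : ENNReal) : EReal)

set_option linter.unusedSectionVars false
set_option maxHeartbeats 1000000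

open Topology

namespace Aux

lemma EReal.le_of_forall_real (x y : EReal) (h : ∀ r : ℝ, y < r → x ≤ r) : x ≤ y := by
  by_contra hc
  push_neg at hc
  obtain ⟨r, hr1, hr2⟩ := EReal.exists_between_coe_real hc
  exact absurd (h r hr1) (not_le.mpr hr2)

lemma EReal.eq_bot_of_forall_real (x : EReal) (h : ∀ r : ℝ, x ≤ r) : x = ⊥ := by
  rw [← le_bot_iff]
  refine EReal.le_of_forall_real x ⊥ (fun r hr => h r)

lemma erealPos_coe (r : ℝ) : erealPos r = ENNReal.ofReal r := by
  simp [erealPos]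

lemma erealPos_bot : erealPos ⊥ = 0 := by simp [erealPos]

lemma erealPos_mono : Monotone erealPos := by
  intro a b hab
  rcases eq_or_ne b ⊤ with hb | hb
  · simp [erealPos, hb]
  have ha : a ≠ ⊤ := fun h => hb (top_le_iff.mp (h ▸ hab))
  simp only [erealPos, if_neg ha, if_neg hb]
  rcases eq_or_ne a ⊥ with h0 | h0
  · simp [h0]
  rcases eq_or_ne b ⊥ with h1 | h1
  · exact absurd (le_bot_iff.mp (h1 ▸ hab)) h0
  exact ENNReal.ofReal_le_ofReal (EReal.toReal_le_toReal hab h0 hb)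

lemma measurable_erealPos : Measurable erealPos := by
  exact erealPos_mono.measurable

lemma erealPos_nonpos {x : EReal} (hx : x ≤ 0) : erealPos x = 0 := by
  rcases eq_or_ne x ⊥ with h | h
  · simp [h, erealPos_bot]
  have hxt : x ≠ ⊤ := fun ht => by simp [ht] at hx
  simp only [erealPos, if_neg hxt]
  rw [ENNReal.ofReal_eq_zero]
  calc x.toReal ≤ (0:EReal).toReal := EReal.toReal_le_toReal hx h (by simp)
  _ = 0 := by simp

lemma erealPos_eq_ofReal {x : EReal} (hx : x ≠ ⊤) : erealPos x = ENNReal.ofReal x.toReal := by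
  simp [erealPos, hx]

/-- `erealPos` sends suprema below suprema. -/
lemma erealPos_iSup_le {ι : Sort*} (a : ι → EReal) :
    erealPos (⨆ i, a i) ≤ ⨆ i, erealPos (a i) := by
  set s := ⨆ i, a i with hs
  rcases eq_or_ne s ⊤ with hst | hst
  · rw [hst]
    -- show RHS = ⊤
    rw [eq_comm] at hst
    by_contra hc
    have hlt : (⨆ i, erealPos (a i)) < ⊤ := lt_top_iff_ne_top.mpr (fun h => hc (h ▸ le_refl _))
    obtain ⟨n, hn⟩ := ENNReal.exists_nat_gt hlt.ne
    have : ∀ i, a i ≤ ((n : ℝ) : EReal) := by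
      intro i
      by_contra hai
      push_neg at hai
      have h1 : erealPos ((n : ℝ) : EReal) ≤ erealPos (a i) := erealPos_mono hai.le
      rw [erealPos_coe] at h1
      have h2 : erealPos (a i) ≤ ⨆ i, erealPos (a i) := le_iSup (fun i => erealPos (a i)) i
      have h3 : (n : ENNReal) ≤ ⨆ i, erealPos (a i) := by
        calc (n : ENNReal) = ENNReal.ofReal (n : ℝ) := by simp [ENNReal.ofReal_natCast]
        _ ≤ _ := le_trans h1 h2
      exact absurd h3 (not_le.mpr hn)
    have : s ≤ ((n : ℝ) : EReal) := iSup_le this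
    rw [← hst] at this
    exact absurd this (not_le.mpr (EReal.coe_lt_top _))
  · -- s ≠ ⊤
    rw [erealPos_eq_ofReal hst]
    rcases le_or_gt s 0 with hs0 | hs0
    · rcases eq_or_ne s ⊥ with hb | hb
      · simp [hb]
      have : s.toReal ≤ 0 := by
        calc s.toReal ≤ (0:EReal).toReal := EReal.toReal_le_toReal hs0 hb (by simp)
        _ = 0 := by simp
      simp [ENNReal.ofReal_eq_zero.mpr this]
    · apply le_of_forall_lt
      intro c hc
      have hcne : c ≠ ⊤ := by
        intro h; rw [h] at hc; exact absurd hc (not_lt.mpr le_top)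
      have hct : c.toReal < s.toReal := by
        rwa [ENNReal.lt_ofReal_iff_toReal_lt hcne] at hc
      obtain ⟨r, hr1, hr2⟩ := exists_between hct
      have hsb : s ≠ ⊥ := hs0.ne_bot
      have hrs : (r : EReal) < s := by
        calc (r : EReal) < (s.toReal : EReal) := by exact_mod_cast hr2
        _ = s := EReal.coe_toReal hst hsb
      obtain ⟨i, hi⟩ := lt_iSup_iff.mp (hs ▸ hrs)
      have h1 : ENNReal.ofReal r ≤ erealPos (a i) := by
        rw [← erealPos_coe]; exact erealPos_mono hi.le
      have h2 : c < ENNReal.ofReal r := by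
        rw [ENNReal.lt_ofReal_iff_toReal_lt hcne]; exact hr1
      exact lt_of_lt_of_le (lt_of_lt_of_le h2 h1) (le_iSup (fun i => erealPos (a i)) i)

/-- `erealPos` sends infima above infima. -/
lemma iInf_erealPos_le {ι : Sort*} [Nonempty ι] (a : ι → EReal) :
    ⨅ i, erealPos (a i) ≤ erealPos (⨅ i, a i) := by
  set t := ⨅ i, a i with ht
  rcases eq_or_ne t ⊤ with htt | htt
  · have h1 : ∀ i, a i = ⊤ := fun i => top_le_iff.mp (htt ▸ iInf_le a i)
    rw [htt]
    simp [h1, erealPos]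
  by_contra hc
  push_neg at hc
  obtain ⟨c, hc1, hc2⟩ := exists_between hc
  have hcub : ∀ i, c ≤ erealPos (a i) :=
    fun i => le_trans hc2.le (iInf_le (fun i => erealPos (a i)) i)
  have hcne : c ≠ ⊤ := hc2.ne_top
  have hc0 : 0 < c := lt_of_le_of_lt zero_le hc1
  -- every a i is ≥ c.toReal
  have hkey : ∀ i, (c.toReal : EReal) ≤ a i := by
    intro i
    rcases eq_or_ne (a i) ⊤ with hai | hai
    · rw [hai]; exact le_top
    rcases eq_or_ne (a i) ⊥ with hab | hab
    · exfalso
      have := hcub i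
      rw [hab, erealPos_bot] at this
      exact absurd this (not_le.mpr hc0)
    have h2 : c ≤ ENNReal.ofReal (a i).toReal := by
      rw [← erealPos_eq_ofReal hai]; exact hcub i
    rcases le_or_gt 0 (a i).toReal with h3 | h3
    · have h4 : c.toReal ≤ (a i).toReal :=
        (ENNReal.le_ofReal_iff_toReal_le hcne h3).mp h2
      calc (c.toReal : EReal) ≤ ((a i).toReal : EReal) := by exact_mod_cast h4
      _ = a i := EReal.coe_toReal hai hab
    · exfalso
      rw [ENNReal.ofReal_eq_zero.mpr h3.le] at h2
      rw [le_zero_iff.mp h2] at hc0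
      exact lt_irrefl _ hc0
  have htc : (c.toReal : EReal) ≤ t := le_iInf hkey
  have htb : t ≠ ⊥ := by
    intro h
    rw [h, le_bot_iff] at htc
    exact (EReal.coe_ne_bot c.toReal) htc
  have h5 : c.toReal ≤ t.toReal := by
    have := EReal.toReal_le_toReal htc (by simp) htt
    simpa using this
  have h6 : c ≤ erealPos t := by
    rw [erealPos_eq_ofReal htt]
    calc c = ENNReal.ofReal c.toReal := (ENNReal.ofReal_toReal hcne).symm
    _ ≤ ENNReal.ofReal t.toReal := ENNReal.ofReal_le_ofReal h5
  exact absurd h6 (not_le.mpr hc1)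

lemma coe_ennreal_eq_coe_toReal {X : ENNReal} (h : X ≠ ⊤) :
    (X : EReal) = ((X.toReal : ℝ) : EReal) := by
  rw [← EReal.toReal_coe_ennreal]
  exact (EReal.coe_toReal (by simpa using h) (EReal.coe_ennreal_ne_bot X)).symm

lemma EReal.le_coe_of_forall_add {x : EReal} {y : ℝ}
    (h : ∀ ε : ℝ, 0 < ε → x ≤ ((y + ε : ℝ) : EReal)) : x ≤ (y : EReal) := by
  apply EReal.le_of_forall_real
  intro r hr
  have hry : y < r := by exact_mod_cast hr
  have := h (r - y) (by linarith)
  simpa using this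

lemma EReal.sub_top' (x : EReal) : x - ⊤ = ⊥ := by
  rw [sub_eq_add_neg, EReal.neg_top, EReal.add_bot]

lemma EReal.neg_iInf' {ι : Sort*} (a : ι → EReal) : -(⨅ i, a i) = ⨆ i, -(a i) := by
  apply le_antisymm
  · rw [EReal.neg_le]
    apply le_iInf
    intro i
    rw [← EReal.neg_le]
    exact le_iSup (fun i => -(a i)) i
  · apply iSup_le
    intro i
    exact EReal.neg_le_neg_iff.mpr (iInf_le a i)

variable {α : Type*} [MeasurableSpace α] {μ : Measure α}

lemma eIntegral_mono_ae {g h : α → EReal} (hgh : g ≤ᵐ[μ] h) :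
    eIntegral μ g ≤ eIntegral μ h := by
  apply EReal.sub_le_sub
  · rw [EReal.coe_ennreal_le_coe_ennreal_iff]
    exact lintegral_mono_ae (hgh.mono fun x hx => erealPos_mono hx)
  · rw [EReal.coe_ennreal_le_coe_ennreal_iff]
    exact lintegral_mono_ae (hgh.mono fun x hx => erealPos_mono (EReal.neg_le_neg_iff.mpr hx))

lemma eIntegral_mono {g h : α → EReal} (hgh : ∀ x, g x ≤ h x) :
    eIntegral μ g ≤ eIntegral μ h :=
  eIntegral_mono_ae (Filter.Eventually.of_forall hgh)

lemma eIntegral_congr_ae {g h : α → EReal} (hgh : g =ᵐ[μ] h) :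
    eIntegral μ g = eIntegral μ h :=
  le_antisymm (eIntegral_mono_ae (hgh.le)) (eIntegral_mono_ae (hgh.symm.le))

lemma eIntegral_iInf_le {g : ℕ → α → EReal}
    (hm : ∀ k, Measurable (g k)) (hanti : ∀ x, Antitone (fun k => g k x))
    (h0 : ∫⁻ x, erealPos (g 0 x) ∂μ ≠ ⊤) :
    ⨅ k, eIntegral μ (g k) ≤ eIntegral μ (fun x => ⨅ k, g k x) := by
  set Pp : ℕ → ENNReal := fun k => ∫⁻ x, erealPos (g k x) ∂μ with hPp
  set Nn : ℕ → ENNReal := fun k => ∫⁻ x, erealPos (-(g k x)) ∂μ with hNn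
  have hPmeas : ∀ k, Measurable fun x => erealPos (g k x) :=
    fun k => measurable_erealPos.comp (hm k)
  have hNmeas : ∀ k, Measurable fun x => erealPos (-(g k x)) :=
    fun k => measurable_erealPos.comp (hm k).neg
  have hPanti : Antitone (fun k => fun x => erealPos (g k x)) :=
    fun j k hjk x => erealPos_mono (hanti x hjk)
  have hPmono : Antitone Pp := fun j k hjk => lintegral_mono fun x => erealPos_mono (hanti x hjk)
  have hNmono : Monotone Nn := fun j k hjk =>
    lintegral_mono fun x => erealPos_mono (EReal.neg_le_neg_iff.mpr (hanti x hjk))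
  have hPk : ∀ k, Pp k ≠ ⊤ := fun k =>
    ne_top_of_le_ne_top h0 (lintegral_mono fun x => erealPos_mono (hanti x (Nat.zero_le k)))
  have hPinf : ⨅ k, Pp k ≠ ⊤ := ne_top_of_le_ne_top (hPk 0) (iInf_le Pp 0)
  have hA : ⨅ k, Pp k ≤ ∫⁻ x, erealPos (⨅ k, g k x) ∂μ := by
    rw [hPp, ← lintegral_iInf hPmeas hPanti h0]
    exact lintegral_mono fun x => iInf_erealPos_le _
  have hB : ∫⁻ x, erealPos (-(⨅ k, g k x)) ∂μ ≤ ⨆ k, Nn k := by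
    rw [hNn, ← lintegral_iSup hNmeas
      (fun j k hjk x => erealPos_mono (EReal.neg_le_neg_iff.mpr (hanti x hjk)))]
    apply lintegral_mono
    intro x
    have hx : (-(⨅ k, g k x)) = ⨆ k, -(g k x) := EReal.neg_iInf' _
    calc erealPos (-(⨅ k, g k x)) = erealPos (⨆ k, -(g k x)) := by rw [hx]
    _ ≤ ⨆ k, erealPos (-(g k x)) := erealPos_iSup_le _
  have main : ⨅ k, eIntegral μ (g k) ≤
      ((⨅ k, Pp k : ENNReal) : EReal) - ((⨆ k, Nn k : ENNReal) : EReal) := by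
    rcases eq_or_ne (⨆ k, Nn k) ⊤ with hNt | hNt
    · rw [hNt, EReal.coe_ennreal_top, EReal.sub_top']
      rw [le_bot_iff]
      apply EReal.eq_bot_of_forall_real
      intro b
      set p0 : ℝ := (Pp 0).toReal with hp0
      have hlt : ENNReal.ofReal (p0 - b) < ⨆ k, Nn k := by
        rw [hNt]; exact ENNReal.ofReal_lt_top
      obtain ⟨k, hk⟩ := lt_iSup_iff.mp hlt
      refine le_trans (iInf_le _ k) ?_
      have h1 : eIntegral μ (g k) ≤ ((Pp 0 : ENNReal) : EReal) - ((Nn k : ENNReal) : EReal) := by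
        apply EReal.sub_le_sub _ le_rfl
        rw [EReal.coe_ennreal_le_coe_ennreal_iff]
        exact hPmono (Nat.zero_le k)
      refine le_trans h1 ?_
      rcases eq_or_ne (Nn k) ⊤ with hNk | hNk
      · rw [hNk, EReal.coe_ennreal_top, EReal.sub_top']
        exact bot_le
      · rw [coe_ennreal_eq_coe_toReal (hPk 0), coe_ennreal_eq_coe_toReal hNk, ← EReal.coe_sub]
        rw [EReal.coe_le_coe_iff]
        have h2 : p0 - b ≤ (Nn k).toReal := by
          rcases le_or_gt (p0 - b) 0 with h3 | h3
          · exact le_trans h3 ENNReal.toReal_nonneg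
          · exact ((ENNReal.ofReal_le_iff_le_toReal hNk).mp hk.le)
        linarith
    · have hNk : ∀ k, Nn k ≠ ⊤ := fun k => ne_top_of_le_ne_top hNt (le_iSup Nn k)
      rw [coe_ennreal_eq_coe_toReal hPinf, coe_ennreal_eq_coe_toReal hNt, ← EReal.coe_sub]
      apply EReal.le_coe_of_forall_add
      intro ε hε
      have h1 : ⨅ k, Pp k < (⨅ k, Pp k) + ENNReal.ofReal (ε / 2) :=
        ENNReal.lt_add_right hPinf (by simp [ENNReal.ofReal_eq_zero]; linarith)
      obtain ⟨k1, hk1⟩ := iInf_lt_iff.mp h1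
      have h2 : ∃ k2, ⨆ k, Nn k ≤ Nn k2 + ENNReal.ofReal (ε / 2) := by
        rcases eq_or_ne (⨆ k, Nn k) 0 with hs0 | hs0
        · exact ⟨0, by rw [hs0]; exact zero_le⟩
        · have hsub : (⨆ k, Nn k) - ENNReal.ofReal (ε / 2) < ⨆ k, Nn k :=
            ENNReal.sub_lt_self hNt hs0 (by simp [ENNReal.ofReal_eq_zero]; linarith)
          obtain ⟨k2, hk2⟩ := lt_iSup_iff.mp hsub
          refine ⟨k2, ?_⟩
          rcases le_or_gt (ENNReal.ofReal (ε / 2)) (⨆ k, Nn k) with hle | hlt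
          · calc ⨆ k, Nn k = ((⨆ k, Nn k) - ENNReal.ofReal (ε / 2)) + ENNReal.ofReal (ε / 2) :=
                (tsub_add_cancel_of_le hle).symm
            _ ≤ Nn k2 + ENNReal.ofReal (ε / 2) := add_le_add hk2.le le_rfl
          · exact le_trans hlt.le le_add_self
      obtain ⟨k2, hk2⟩ := h2
      set k := max k1 k2 with hkdef
      refine le_trans (iInf_le _ k) ?_
      have hPkk : Pp k < (⨅ k, Pp k) + ENNReal.ofReal (ε / 2) :=
        lt_of_le_of_lt (hPmono (le_max_left k1 k2)) hk1
      have hNkk : ⨆ j, Nn j ≤ Nn k + ENNReal.ofReal (ε / 2) :=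
        le_trans hk2 (add_le_add (hNmono (le_max_right k1 k2)) le_rfl)
      have heq : eIntegral μ (g k) = (((Pp k).toReal - (Nn k).toReal : ℝ) : EReal) := by
        show ((Pp k : ENNReal) : EReal) - ((Nn k : ENNReal) : EReal) = _
        rw [coe_ennreal_eq_coe_toReal (hPk k), coe_ennreal_eq_coe_toReal (hNk k), ← EReal.coe_sub]
      rw [heq, EReal.coe_le_coe_iff]
      have e1 : (Pp k).toReal ≤ (⨅ j, Pp j).toReal + ε / 2 := by
        have := ENNReal.toReal_mono (by
          exact ENNReal.add_ne_top.mpr ⟨hPinf, ENNReal.ofReal_ne_top⟩) hPkk.le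
        rwa [ENNReal.toReal_add hPinf ENNReal.ofReal_ne_top,
          ENNReal.toReal_ofReal (by linarith)] at this
      have e2 : (⨆ j, Nn j).toReal ≤ (Nn k).toReal + ε / 2 := by
        have := ENNReal.toReal_mono (by
          exact ENNReal.add_ne_top.mpr ⟨hNk k, ENNReal.ofReal_ne_top⟩) hNkk
        rwa [ENNReal.toReal_add (hNk k) ENNReal.ofReal_ne_top,
          ENNReal.toReal_ofReal (by linarith)] at this
      linarith
  refine le_trans main (EReal.sub_le_sub ?_ ?_)
  · rw [EReal.coe_ennreal_le_coe_ennreal_iff]; exact hA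
  · rw [EReal.coe_ennreal_le_coe_ennreal_iff]; exact hB

section MaxErgodic

variable {T : α → α} {g : α → ℝ}

/-- Birkhoff sums. -/
noncomputable def birkS (T : α → α) (g : α → ℝ) (n : ℕ) (x : α) : ℝ :=
  ∑ i ∈ Finset.range n, g (T^[i] x)

lemma birkS_succ' (T : α → α) (g : α → ℝ) (n : ℕ) (x : α) :
    birkS T g (n + 1) x = g x + birkS T g n (T x) := by
  unfold birkS
  rw [Finset.sum_range_succ']
  simp only [Function.iterate_succ_apply, Function.iterate_zero_apply]
  ring

lemma birkS_measurable (hT : Measurable T) (hg : Measurable g) (n : ℕ) :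
    Measurable (birkS T g n) := by
  unfold birkS
  exact Finset.measurable_sum _ (fun i _ => hg.comp (hT.iterate i))

lemma integrable_comp_mp (hT : MeasurePreserving T μ μ) (hgm : Measurable g)
    (hg : Integrable g μ) : Integrable (fun x => g (T x)) μ := by
  have h : Integrable g (Measure.map T μ) ↔ Integrable (g ∘ T) μ :=
    integrable_map_measure (by rw [hT.map_eq]; exact hgm.aestronglyMeasurable)
      hT.measurable.aemeasurable
  rw [hT.map_eq] at h
  exact h.mp hg

lemma birkS_integrable (hT : MeasurePreserving T μ μ) (hgm : Measurable g)
    (hg : Integrable g μ) (n : ℕ) : Integrable (birkS T g n) μ := by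
  unfold birkS
  apply integrable_finset_sum
  intro i _
  exact integrable_comp_mp (hT.iterate i) hgm hg

/-- Partial maxima of Birkhoff sums `max (S_1, ..., S_{N+1})`. -/
noncomputable def maxPart (T : α → α) (g : α → ℝ) : ℕ → α → ℝ
  | 0 => fun x => birkS T g 1 x
  | (N + 1) => fun x => max (maxPart T g N x) (birkS T g (N + 2) x)

lemma maxPart_measurable (hT : Measurable T) (hg : Measurable g) (N : ℕ) :
    Measurable (maxPart T g N) := by
  induction N with
  | zero => exact birkS_measurable hT hg 1
  | succ N ih => exact ih.max (birkS_measurable hT hg (N + 2))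

lemma maxPart_integrable (hT : MeasurePreserving T μ μ) (hgm : Measurable g)
    (hg : Integrable g μ) (N : ℕ) : Integrable (maxPart T g N) μ := by
  induction N with
  | zero => exact birkS_integrable hT hgm hg 1
  | succ N ih => exact ih.sup (birkS_integrable hT hgm hg (N + 2))

lemma maxPart_mono (T : α → α) (g : α → ℝ) (x : α) : Monotone (fun N => maxPart T g N x) := by
  apply monotone_nat_of_le_succ
  intro N
  exact le_max_left _ _

lemma birkS_le_maxPart (T : α → α) (g : α → ℝ) (x : α) {n N : ℕ} (h : n ≤ N) :
    birkS T g (n + 1) x ≤ maxPart T g N x := by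
  induction N with
  | zero => rw [Nat.le_zero.mp h]; exact le_refl _
  | succ N ih =>
    rcases Nat.lt_succ_iff_lt_or_eq.mp (Nat.lt_succ_of_le h) with h1 | h1
    · exact le_trans (ih (Nat.lt_succ_iff.mp h1)) (le_max_left _ _)
    · rw [h1]; exact le_max_right _ _

lemma maxPart_le_some (T : α → α) (g : α → ℝ) (x : α) (N : ℕ) :
    ∃ n, 1 ≤ n ∧ maxPart T g N x ≤ birkS T g n x := by
  induction N with
  | zero => exact ⟨1, le_refl _, le_refl _⟩
  | succ N ih =>
    obtain ⟨n, hn1, hn2⟩ := ih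
    rcases max_cases (maxPart T g N x) (birkS T g (N + 2) x) with ⟨h1, _⟩ | ⟨h1, _⟩
    · exact ⟨n, hn1, by rw [show maxPart T g (N+1) x = max (maxPart T g N x) (birkS T g (N + 2) x) from rfl, h1]; exact hn2⟩
    · exact ⟨N + 2, by omega, by rw [show maxPart T g (N+1) x = max (maxPart T g N x) (birkS T g (N + 2) x) from rfl, h1]⟩

lemma maxPart_key (T : α → α) (g : α → ℝ) (x : α) (N : ℕ) :
    maxPart T g N x ≤ g x + max (maxPart T g N (T x)) 0 := by
  induction N with
  | zero =>
    show birkS T g 1 x ≤ _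
    rw [show (1 : ℕ) = 0 + 1 from rfl, birkS_succ']
    simp only [birkS]
    simp
  | succ N ih =>
    show max (maxPart T g N x) (birkS T g (N + 2) x) ≤ _
    apply max_le
    · refine le_trans ih ?_
      have : max (maxPart T g N (T x)) 0 ≤ max (maxPart T g (N + 1) (T x)) 0 :=
        max_le_max (maxPart_mono T g (T x) (Nat.le_succ N)) (le_refl 0)
      linarith
    · rw [show N + 2 = (N + 1) + 1 from rfl, birkS_succ']
      have h1 : birkS T g (N + 1) (T x) ≤ maxPart T g (N + 1) (T x) := by
        have := birkS_le_maxPart T g (T x) (le_refl N)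
        exact le_trans this (maxPart_mono T g (T x) (Nat.le_succ N))
      have h2 : maxPart T g (N + 1) (T x) ≤ max (maxPart T g (N + 1) (T x)) 0 := le_max_left _ _
      linarith

/-- The maximal ergodic theorem (Garsia's proof). -/
lemma maxErgodic [IsProbabilityMeasure μ] (hT : MeasurePreserving T μ μ) (hgm : Measurable g)
    (hg : Integrable g μ) :
    0 ≤ ∫ x in {x | ∃ n, 1 ≤ n ∧ 0 < birkS T g n x}, g x ∂μ := by
  set E : ℕ → Set α := fun N => {x | 0 < maxPart T g N x} with hE
  have hEmeas : ∀ N, MeasurableSet (E N) := fun N =>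
    measurableSet_lt measurable_const (maxPart_measurable hT.measurable hgm N)
  have hEmono : Monotone E := by
    apply monotone_nat_of_le_succ
    intro N x hx
    exact lt_of_lt_of_le hx (maxPart_mono T g x (Nat.le_succ N))
  have hA : {x | ∃ n, 1 ≤ n ∧ 0 < birkS T g n x} = ⋃ N, E N := by
    ext x
    simp only [Set.mem_setOf_eq, Set.mem_iUnion]
    constructor
    · rintro ⟨n, hn1, hn2⟩
      refine ⟨n - 1, ?_⟩
      have : birkS T g n x ≤ maxPart T g (n - 1) x := by
        have := birkS_le_maxPart T g x (le_refl (n - 1))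
        rwa [show n - 1 + 1 = n by omega] at this
      exact lt_of_lt_of_le hn2 this
    · rintro ⟨N, hN⟩
      obtain ⟨n, hn1, hn2⟩ := maxPart_le_some T g x N
      exact ⟨n, hn1, lt_of_lt_of_le hN hn2⟩
  have hstep : ∀ N, 0 ≤ ∫ x in E N, g x ∂μ := by
    intro N
    set Φp : α → ℝ := fun x => max (maxPart T g N x) 0 with hΦp
    have hΦp_meas : Measurable Φp := (maxPart_measurable hT.measurable hgm N).max measurable_const
    have hΦp_int : Integrable Φp μ := (maxPart_integrable hT hgm hg N).sup (integrable_const 0)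
    have hΦpT_int : Integrable (fun x => Φp (T x)) μ := integrable_comp_mp hT hΦp_meas hΦp_int
    have key2 : ∀ x ∈ E N, Φp x - Φp (T x) ≤ g x := by
      intro x hx
      have h1 : Φp x = maxPart T g N x := max_eq_left (le_of_lt hx)
      have h2 := maxPart_key T g x N
      rw [h1]
      have : max (maxPart T g N (T x)) 0 = Φp (T x) := rfl
      linarith [h2, this ▸ h2]
    have hmono1 : ∫ x in E N, (Φp x - Φp (T x)) ∂μ ≤ ∫ x in E N, g x ∂μ := by
      apply setIntegral_mono_on
      · exact (hΦp_int.sub hΦpT_int).integrableOn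
      · exact hg.integrableOn
      · exact hEmeas N
      · exact key2
    have hsplit : ∫ x in E N, (Φp x - Φp (T x)) ∂μ
        = (∫ x in E N, Φp x ∂μ) - ∫ x in E N, Φp (T x) ∂μ :=
      integral_sub hΦp_int.integrableOn hΦpT_int.integrableOn
    have hfull : ∫ x in E N, Φp x ∂μ = ∫ x, Φp x ∂μ := by
      have hcompl : ∫ x in (E N)ᶜ, Φp x ∂μ = 0 := by
        rw [show (0:ℝ) = ∫ x in (E N)ᶜ, (0:ℝ) ∂μ by simp]
        apply setIntegral_congr_fun (hEmeas N).compl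
        intro x hx
        simp only [Set.mem_compl_iff, hE, Set.mem_setOf_eq, not_lt] at hx
        exact max_eq_right hx
      rw [← integral_add_compl (hEmeas N) hΦp_int, hcompl, add_zero]
    have hle : ∫ x in E N, Φp (T x) ∂μ ≤ ∫ x, Φp (T x) ∂μ := by
      apply setIntegral_le_integral hΦpT_int
      apply Filter.Eventually.of_forall
      intro x
      exact le_max_right _ _
    have hTeq : ∫ x, Φp (T x) ∂μ = ∫ x, Φp x ∂μ := by
      rw [← integral_map hT.measurable.aemeasurable hΦp_meas.aestronglyMeasurable, hT.map_eq]
    calc (0:ℝ) = (∫ x, Φp x ∂μ) - ∫ x, Φp x ∂μ := by ring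
    _ ≤ (∫ x in E N, Φp x ∂μ) - ∫ x in E N, Φp (T x) ∂μ := by
        rw [hfull]
        have := hTeq ▸ hle
        linarith
    _ = ∫ x in E N, (Φp x - Φp (T x)) ∂μ := hsplit.symm
    _ ≤ ∫ x in E N, g x ∂μ := hmono1
  rw [hA]
  have hlim := tendsto_setIntegral_of_monotone hEmeas hEmono (hg.integrableOn (s := ⋃ N, E N))
  exact ge_of_tendsto' hlim hstep

end MaxErgodic

section LimsupHelpers

lemma limsup_coe_add_le (u v : ℕ → ℝ) (hv : Tendsto v atTop (𝓝 0)) :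
    limsup (fun n => ((u n + v n : ℝ) : EReal)) atTop ≤ limsup (fun n => ((u n : ℝ) : EReal)) atTop := by
  apply EReal.le_of_forall_real
  intro r hr
  obtain ⟨M, hM1, hM2⟩ := EReal.exists_between_coe_real hr
  have h1 : ∀ᶠ n in atTop, ((u n : ℝ) : EReal) < (M : EReal) := eventually_lt_of_limsup_lt hM1
  have h2 : ∀ᶠ n in atTop, v n < r - M :=
    hv.eventually_lt_const (by exact_mod_cast sub_pos.mpr (EReal.coe_lt_coe_iff.mp hM2))
  apply limsup_le_of_le
  · isBoundedDefault
  · filter_upwards [h1, h2] with n hn1 hn2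
    have hun : u n < M := EReal.coe_lt_coe_iff.mp hn1
    exact le_of_lt (EReal.coe_lt_coe_iff.mpr (by linarith))

lemma limsup_coe_add_zero (u v : ℕ → ℝ) (hv : Tendsto v atTop (𝓝 0)) :
    limsup (fun n => ((u n + v n : ℝ) : EReal)) atTop
      = limsup (fun n => ((u n : ℝ) : EReal)) atTop := by
  apply le_antisymm (limsup_coe_add_le u v hv)
  have h1 : limsup (fun n => ((u n : ℝ) : EReal)) atTop
      = limsup (fun n => (((u n + v n) + (- v n) : ℝ) : EReal)) atTop := by
    apply Filter.limsup_congr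
    apply Eventually.of_forall
    intro n
    norm_num
  rw [h1]
  exact limsup_coe_add_le (fun n => u n + v n) (fun n => - v n) (by simpa using hv.neg)

lemma limsup_coe_mul_le (u c : ℕ → ℝ) (hc : Tendsto c atTop (𝓝 1)) (hcpos : ∀ᶠ n in atTop, 0 < c n) :
    limsup (fun n => ((c n * u n : ℝ) : EReal)) atTop ≤ limsup (fun n => ((u n : ℝ) : EReal)) atTop := by
  apply EReal.le_of_forall_real
  intro r hr
  obtain ⟨M, hM1, hM2⟩ := EReal.exists_between_coe_real hr
  have hMr : M < r := EReal.coe_lt_coe_iff.mp hM2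
  have h1 : ∀ᶠ n in atTop, ((u n : ℝ) : EReal) < (M : EReal) := eventually_lt_of_limsup_lt hM1
  have h3 : Tendsto (fun n => c n * M) atTop (𝓝 M) := by
    have := hc.mul_const M
    rwa [one_mul] at this
  have h2 : ∀ᶠ n in atTop, c n * M < r := h3.eventually_lt_const hMr
  apply limsup_le_of_le
  · isBoundedDefault
  · filter_upwards [h1, h2, hcpos] with n hn1 hn2 hn3
    have hun : u n < M := EReal.coe_lt_coe_iff.mp hn1
    have : c n * u n < c n * M := by exact mul_lt_mul_of_pos_left hun hn3
    exact le_of_lt (EReal.coe_lt_coe_iff.mpr (by linarith))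

lemma limsup_coe_mul_one (u c : ℕ → ℝ) (hc : Tendsto c atTop (𝓝 1)) (hcpos : ∀ᶠ n in atTop, 0 < c n) :
    limsup (fun n => ((c n * u n : ℝ) : EReal)) atTop = limsup (fun n => ((u n : ℝ) : EReal)) atTop := by
  apply le_antisymm (limsup_coe_mul_le u c hc hcpos)
  have h1 : limsup (fun n => ((u n : ℝ) : EReal)) atTop
      = limsup (fun n => (((c n)⁻¹ * (c n * u n) : ℝ) : EReal)) atTop := by
    apply Filter.limsup_congr
    filter_upwards [hcpos] with n hn
    rw [inv_mul_cancel_left₀ hn.ne']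
  rw [h1]
  apply limsup_coe_mul_le
  · have := hc.inv₀ (by norm_num : (1:ℝ) ≠ 0)
    simpa using this
  · filter_upwards [hcpos] with n hn
    exact inv_pos.mpr hn

lemma limsup_shift (u : ℕ → EReal) :
    limsup (fun n => u (n + 1)) atTop = limsup u atTop := by
  rw [show (fun n => u (n+1)) = u ∘ (fun n => n + 1) from rfl]
  unfold Filter.limsup
  rw [← Filter.map_map, Filter.map_add_atTop_eq_nat]

end LimsupHelpers

section HalfBirkhoff

variable {T : α → α} {g : α → ℝ}

lemma real_halfBirkhoff [IsProbabilityMeasure μ] (hT : Ergodic T μ)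
    (hgm : Measurable g) (hg : Integrable g μ) :
    ∀ᵐ x ∂μ, limsup (fun n : ℕ => (((n : ℝ)⁻¹ * birkS T g n x : ℝ) : EReal)) atTop
      ≤ ((∫ x, g x ∂μ : ℝ) : EReal) := by
  set a : ℝ := ∫ x, g x ∂μ with ha
  set avg : ℕ → α → ℝ := fun (n : ℕ) (x : α) => (n : ℝ)⁻¹ * birkS T g n x with havg
  set h : α → EReal := fun x => limsup (fun n => ((avg n x : ℝ) : EReal)) atTop with hh
  have hmeas_h : Measurable h := by
    apply Measurable.limsup
    intro n
    exact measurable_coe_real_ereal.comp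
      (measurable_const.mul (birkS_measurable hT.toMeasurePreserving.measurable hgm n))
  have hinv : ∀ x, h (T x) = h x := by
    intro x
    have hrec : ∀ n : ℕ, avg n (T x) = (((n:ℝ)+1)/n) * avg (n+1) x + (-g x) * (n:ℝ)⁻¹ := by
      intro n
      rcases Nat.eq_zero_or_pos n with h0 | h0
      · subst h0
        simp [havg]
      · have hn : (n : ℝ) ≠ 0 := Nat.cast_ne_zero.mpr h0.ne'
        have hS : birkS T g n (T x) = birkS T g (n+1) x - g x := by
          rw [birkS_succ']; ring
        simp only [havg, hS, Nat.cast_add, Nat.cast_one]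
        field_simp
        ring
    have step1 : h (T x) = limsup
        (fun n : ℕ => (((((n:ℝ)+1)/n) * avg (n+1) x + (-g x) * (n:ℝ)⁻¹ : ℝ) : EReal)) atTop := by
      apply Filter.limsup_congr
      apply Eventually.of_forall
      intro n
      rw [hrec n]
    have step2 : limsup
        (fun n : ℕ => (((((n:ℝ)+1)/n) * avg (n+1) x + (-g x) * (n:ℝ)⁻¹ : ℝ) : EReal)) atTop
        = limsup (fun n : ℕ => (((((n:ℝ)+1)/n) * avg (n+1) x : ℝ) : EReal)) atTop := by
      apply limsup_coe_add_zero
      have := (tendsto_inv_atTop_nhds_zero_nat (𝕜 := ℝ)).const_mul (-g x)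
      simpa using this
    have hctend : Tendsto (fun n : ℕ => ((n:ℝ)+1)/n) atTop (𝓝 1) := by
      have h1 : Tendsto (fun n : ℕ => 1 + (n:ℝ)⁻¹) atTop (𝓝 1) := by
        have h2 : Tendsto (fun n : ℕ => (1:ℝ) + (n:ℝ)⁻¹) atTop (𝓝 ((1:ℝ) + 0)) :=
          tendsto_const_nhds.add tendsto_inv_atTop_nhds_zero_nat
        simpa using h2
      apply h1.congr'
      filter_upwards [eventually_ge_atTop 1] with n hn
      have hne : (n:ℝ) ≠ 0 := Nat.cast_ne_zero.mpr (by omega)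
      field_simp
    have hcpos : ∀ᶠ n : ℕ in atTop, 0 < ((n:ℝ)+1)/n := by
      filter_upwards [eventually_ge_atTop 1] with n hn
      have : (0:ℝ) < n := by exact_mod_cast Nat.pos_of_ne_zero (by omega)
      positivity
    have step3 : limsup (fun n : ℕ => (((((n:ℝ)+1)/n) * avg (n+1) x : ℝ) : EReal)) atTop
        = limsup (fun n : ℕ => ((avg (n+1) x : ℝ) : EReal)) atTop :=
      limsup_coe_mul_one _ _ hctend hcpos
    have step4 : limsup (fun n : ℕ => ((avg (n+1) x : ℝ) : EReal)) atTop = h x :=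
      limsup_shift (fun n => ((avg n x : ℝ) : EReal))
    rw [step1, step2, step3, step4]
  -- for each m, a.e. h x ≤ a + 1/(m+1)
  have hmain : ∀ m : ℕ, ∀ᵐ x ∂μ, h x ≤ ((a + 1/(m+1) : ℝ) : EReal) := by
    intro m
    set ε : ℝ := 1/(m+1) with hε
    have hεpos : 0 < ε := by positivity
    set B : Set α := {x | ((a + ε : ℝ) : EReal) < h x} with hB
    have hBmeas : MeasurableSet B := measurableSet_lt measurable_const hmeas_h
    have hBinv : T ⁻¹' B = B := by
      ext x
      simp only [hB, Set.mem_preimage, Set.mem_setOf_eq]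
      rw [hinv x]
    rcases hT.toPreErgodic.measure_self_or_compl_eq_zero hBmeas hBinv with hB0 | hBc0
    · rw [ae_iff]
      convert hB0 using 2
      ext x
      simp [hB, not_le]
    · exfalso
      set g' : α → ℝ := fun x => g x - (a + ε) with hg'
      have hg'm : Measurable g' := hgm.sub measurable_const
      have hg'int : Integrable g' μ := hg.sub (integrable_const _)
      set A : Set α := {x | ∃ n, 1 ≤ n ∧ 0 < birkS T g' n x} with hA
      have hbirk' : ∀ n x, birkS T g' n x = birkS T g n x - n * (a + ε) := by
        intro n x
        simp only [birkS, hg']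
        rw [Finset.sum_sub_distrib, Finset.sum_const, Finset.card_range, nsmul_eq_mul]
      have hsub : B ⊆ A := by
        intro x hx
        have hfreq : ∃ᶠ n in atTop, ((a + ε : ℝ) : EReal) < ((avg n x : ℝ) : EReal) :=
          frequently_lt_of_lt_limsup (by isBoundedDefault) hx
        obtain ⟨n, hn1, hn2⟩ := (frequently_atTop.mp hfreq) 1
        have hlt : a + ε < avg n x := EReal.coe_lt_coe_iff.mp hn2
        have hnpos : (0:ℝ) < n := by exact_mod_cast hn1
        refine ⟨n, hn1, ?_⟩
        rw [hbirk']
        have : (n:ℝ) * (a + ε) < (n:ℝ) * avg n x := mul_lt_mul_of_pos_left hlt hnpos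
        have heq : (n:ℝ) * avg n x = birkS T g n x := by
          simp only [havg]
          field_simp
        linarith [heq ▸ this]
      have hAmeas : MeasurableSet A := by
        rw [hA, Set.setOf_exists]
        apply MeasurableSet.iUnion
        intro n
        have : {x | 1 ≤ n ∧ 0 < birkS T g' n x} = {x | 1 ≤ n} ∩ {x | 0 < birkS T g' n x} := rfl
        rw [this]
        exact (MeasurableSet.const _).inter
          (measurableSet_lt measurable_const (birkS_measurable hT.toMeasurePreserving.measurable hg'm n))
      have hAc0 : μ Aᶜ = 0 := measure_mono_null (Set.compl_subset_compl.mpr hsub) hBc0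
      have hmax := maxErgodic hT.toMeasurePreserving hg'm hg'int
      have hAfull : ∫ x in A, g' x ∂μ = ∫ x, g' x ∂μ := by
        have hcompl : ∫ x in Aᶜ, g' x ∂μ = 0 := by
          rw [Measure.restrict_eq_zero.mpr hAc0, integral_zero_measure]
        rw [← integral_add_compl hAmeas hg'int, hcompl, add_zero]
      have hval : ∫ x, g' x ∂μ = -ε := by
        rw [hg']
        simp only []
        rw [integral_sub hg (integrable_const _), integral_const]
        simp [ha]
      rw [← hA] at hmax
      rw [hAfull, hval] at hmax
      linarith
  have hae := (ae_all_iff).mpr hmain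
  filter_upwards [hae] with x hx
  show h x ≤ (a : EReal)
  by_contra hc
  push_neg at hc
  obtain ⟨y, hy1, hy2⟩ := EReal.exists_between_coe_real hc
  have hya : a < y := EReal.coe_lt_coe_iff.mp hy1
  obtain ⟨m, hm⟩ := exists_nat_one_div_lt (show (0:ℝ) < y - a by linarith)
  have h1 := hx m
  have h2 : ((a + 1/(m+1) : ℝ) : EReal) < (y : EReal) := by
    rw [EReal.coe_lt_coe_iff]
    push_cast at hm ⊢
    linarith
  exact lt_irrefl (h x) (lt_trans (lt_of_le_of_lt h1 h2) hy2)

end HalfBirkhoff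

section ERealHB

lemma exists_iSup_le_add (Nn : ℕ → ENNReal) (hNt : ⨆ k, Nn k ≠ ⊤) {ε : ℝ} (hε : 0 < ε) :
    ∃ k, ⨆ j, Nn j ≤ Nn k + ENNReal.ofReal ε := by
  rcases eq_or_ne (⨆ k, Nn k) 0 with hs0 | hs0
  · exact ⟨0, by rw [hs0]; exact zero_le⟩
  · have hsub : (⨆ k, Nn k) - ENNReal.ofReal ε < ⨆ k, Nn k :=
      ENNReal.sub_lt_self hNt hs0 (by simp [ENNReal.ofReal_eq_zero]; linarith)
    obtain ⟨k, hk⟩ := lt_iSup_iff.mp hsub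
    refine ⟨k, ?_⟩
    rcases le_or_gt (ENNReal.ofReal ε) (⨆ j, Nn j) with hle | hlt
    · calc ⨆ j, Nn j = ((⨆ j, Nn j) - ENNReal.ofReal ε) + ENNReal.ofReal ε :=
          (tsub_add_cancel_of_le hle).symm
      _ ≤ Nn k + ENNReal.ofReal ε := add_le_add hk.le le_rfl
    · exact le_trans hlt.le le_add_self

lemma EReal.coe_finset_sum {n : ℕ} (f : ℕ → ℝ) :
    ((∑ i ∈ Finset.range n, f i : ℝ) : EReal) = ∑ i ∈ Finset.range n, ((f i : ℝ) : EReal) := by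
  induction n with
  | zero => simp
  | succ n ih => rw [Finset.sum_range_succ, Finset.sum_range_succ, EReal.coe_add, ih]

lemma EReal.neg_sup' (a b : EReal) : -(a ⊔ b) = (-a) ⊓ (-b) := by
  rcases le_total a b with h | h
  · rw [sup_eq_right.mpr h, inf_eq_right.mpr (EReal.neg_le_neg_iff.mpr h)]
  · rw [sup_eq_left.mpr h, inf_eq_left.mpr (EReal.neg_le_neg_iff.mpr h)]

lemma iSup_min_ofReal_nat (x : ENNReal) : ⨆ M : ℕ, (x ⊓ ENNReal.ofReal (M : ℝ)) = x := by
  apply le_antisymm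
  · exact iSup_le fun M => min_le_left _ _
  · rcases eq_or_ne x ⊤ with hx | hx
    · rw [hx]
      by_contra hc
      push_neg at hc
      have hne : (⨆ M : ℕ, ((⊤ : ENNReal) ⊓ ENNReal.ofReal (M : ℝ))) ≠ ⊤ := hc.ne
      obtain ⟨n, hn⟩ := ENNReal.exists_nat_gt hne
      have : ((n : ENNReal)) ≤ ⨆ M : ℕ, ((⊤ : ENNReal) ⊓ ENNReal.ofReal (M : ℝ)) := by
        have h1 : ((⊤:ENNReal) ⊓ ENNReal.ofReal ((n:ℕ) : ℝ)) = (n : ENNReal) := by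
          rw [ENNReal.ofReal_natCast]
          exact min_eq_right le_top
        exact le_trans (le_of_eq h1.symm)
          (le_iSup (fun M : ℕ => ((⊤ : ENNReal) ⊓ ENNReal.ofReal (M : ℝ))) n)
      exact absurd this (not_le.mpr hn)
    · obtain ⟨n, hn⟩ := ENNReal.exists_nat_gt hx
      have h1 : x ⊓ ENNReal.ofReal ((n:ℕ) : ℝ) = x := by
        rw [ENNReal.ofReal_natCast]
        exact min_eq_left hn.le
      exact le_trans (le_of_eq h1.symm)
        (le_iSup (fun M : ℕ => (x ⊓ ENNReal.ofReal (M : ℝ))) n)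

variable {T : α → α}

lemma ereal_halfBirkhoff [IsProbabilityMeasure μ] (hT : Ergodic T μ)
    {φ : α → EReal} (hφ : Measurable φ) (hpos : ∫⁻ y, erealPos (φ y) ∂μ ≠ ⊤) :
    ∀ᵐ y ∂μ, limsup
        (fun n : ℕ => (((n : ℝ)⁻¹ : ℝ) : EReal) * ∑ i ∈ Finset.range n, φ (T^[i] y)) atTop
      ≤ eIntegral μ φ := by
  -- the truncations
  set ψ : ℕ → α → ℝ := fun M y => ((φ y) ⊔ ((-(M : ℝ) : ℝ) : EReal)).toReal with hψ
  have hψmeas : ∀ M, Measurable (ψ M) := fun M =>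
    measurable_ereal_toReal.comp (hφ.max measurable_const)
  have habs : ∀ M (y : α), |ψ M y| ≤ (erealPos (φ y)).toReal + M := by
    intro M y
    have hM0 : (0:ℝ) ≤ M := Nat.cast_nonneg M
    rcases eq_or_ne (φ y) ⊤ with htop | htop
    · simp only [hψ, htop]
      rw [top_sup_eq]
      simp only [EReal.toReal_top, abs_zero]
      positivity
    · set s : EReal := (φ y) ⊔ ((-(M : ℝ) : ℝ) : EReal) with hs
      have hsb : s ≠ ⊥ := fun h => by
        rw [hs] at h
        have := le_sup_right (a := φ y) (b := ((-(M : ℝ) : ℝ) : EReal))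
        rw [h, le_bot_iff] at this
        exact EReal.coe_ne_bot _ this
      have hst : s ≠ ⊤ := by
        rw [hs]
        rcases le_total (φ y) ((-(M : ℝ) : ℝ) : EReal) with h | h
        · rw [sup_eq_right.mpr h]; exact EReal.coe_ne_top _
        · rw [sup_eq_left.mpr h]; exact htop
      rw [abs_le]
      constructor
      · have h1 : ((-(M : ℝ) : ℝ) : EReal) ≤ s := le_sup_right
        have h2 : (-(M:ℝ)) ≤ s.toReal := by
          have := EReal.toReal_le_toReal h1 (EReal.coe_ne_bot _) hst
          rwa [EReal.toReal_coe] at this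
        have h3 : (0:ℝ) ≤ (erealPos (φ y)).toReal := ENNReal.toReal_nonneg
        show -((erealPos (φ y)).toReal + (M:ℝ)) ≤ ψ M y
        have : ψ M y = s.toReal := rfl
        rw [this]
        linarith
      · show ψ M y ≤ (erealPos (φ y)).toReal + (M:ℝ)
        have hψs : ψ M y = s.toReal := rfl
        rw [hψs]
        rcases le_total (φ y) ((-(M : ℝ) : ℝ) : EReal) with h | h
        · rw [hs, sup_eq_right.mpr h, EReal.toReal_coe]
          have h3 : (0:ℝ) ≤ (erealPos (φ y)).toReal := ENNReal.toReal_nonneg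
          linarith
        · rw [hs, sup_eq_left.mpr h]
          rcases le_total ((φ y).toReal) 0 with h4 | h4
          · have h3 : (0:ℝ) ≤ (erealPos (φ y)).toReal := ENNReal.toReal_nonneg
            linarith
          · rw [erealPos_eq_ofReal htop, ENNReal.toReal_ofReal h4]
            linarith
  have hψint : ∀ M, Integrable (ψ M) μ := by
    intro M
    have hbound : Integrable (fun y => (erealPos (φ y)).toReal + (M:ℝ)) μ :=
      (integrable_toReal_of_lintegral_ne_top (measurable_erealPos.comp hφ).aemeasurable
        hpos).add (integrable_const _)
    exact hbound.mono' (hψmeas M).aestronglyMeasurable (ae_of_all _ (habs M))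
  -- null set where φ = ⊤
  have hφtopmeas : MeasurableSet {y | φ y = ⊤} := hφ (measurableSet_singleton ⊤)
  have htopnull : μ {y | φ y = ⊤} = 0 := by
    by_contra hne
    apply hpos
    have h1 : ∫⁻ y in {y | φ y = ⊤}, erealPos (φ y) ∂μ = ⊤ := by
      have h2 : ∀ᵐ y ∂(μ.restrict {y | φ y = ⊤}), erealPos (φ y) = ⊤ := by
        rw [ae_restrict_iff' hφtopmeas]
        apply ae_of_all
        intro y hy
        simp only [Set.mem_setOf_eq] at hy
        simp [erealPos, hy]
      rw [lintegral_congr_ae h2, lintegral_const]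
      rw [Measure.restrict_apply_univ]
      exact ENNReal.top_mul hne
    rw [eq_top_iff, ← h1]
    exact setLIntegral_le_lintegral _ _
  have hnull : ∀ᵐ y ∂μ, ∀ i : ℕ, φ (T^[i] y) ≠ ⊤ := by
    rw [ae_all_iff]
    intro i
    have h1 : μ (T^[i] ⁻¹' {y | φ y = ⊤}) = 0 := by
      rw [(hT.toMeasurePreserving.iterate i).measure_preimage hφtopmeas.nullMeasurableSet]
      exact htopnull
    rw [ae_iff]
    convert h1 using 2
    ext y
    simp [Set.mem_preimage]
  have hne : ∀ᵐ y ∂μ, φ y ≠ ⊤ := by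
    rw [ae_iff]
    simpa using htopnull
  -- per-M real Birkhoff bound
  have hrealM : ∀ M : ℕ, ∀ᵐ y ∂μ,
      limsup (fun n : ℕ => (((n : ℝ)⁻¹ * birkS T (ψ M) n y : ℝ) : EReal)) atTop
        ≤ ((∫ y, ψ M y ∂μ : ℝ) : EReal) :=
    fun M => real_halfBirkhoff hT (hψmeas M) (hψint M)
  -- the key inf bound
  have hfin : ⨅ M : ℕ, ((∫ y, ψ M y ∂μ : ℝ) : EReal) ≤ eIntegral μ φ := by
    set Ppos : ENNReal := ∫⁻ y, erealPos (φ y) ∂μ with hPpos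
    set NM : ℕ → ENNReal := fun M => ∫⁻ y, (erealPos (-(φ y)) ⊓ ENNReal.ofReal (M:ℝ)) ∂μ with hNM
    set Nneg : ENNReal := ∫⁻ y, erealPos (-(φ y)) ∂μ with hNneg
    have hNMfin : ∀ M, NM M ≠ ⊤ := by
      intro M
      have : NM M ≤ ENNReal.ofReal (M:ℝ) * μ Set.univ := by
        rw [hNM, ← lintegral_const]
        exact lintegral_mono fun y => min_le_right _ _
      refine ne_top_of_le_ne_top ?_ this
      simp [measure_univ]
    have hintψ : ∀ M, ∫ y, ψ M y ∂μ = Ppos.toReal - (NM M).toReal := by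
      intro M
      have e1 : ∫⁻ y, ENNReal.ofReal (ψ M y) ∂μ = Ppos := by
        apply lintegral_congr_ae
        filter_upwards [hne] with y hy
        show ENNReal.ofReal (ψ M y) = erealPos (φ y)
        have hy' : φ y ≠ ⊤ := hy
        rcases le_total (φ y) 0 with h1 | h1
        · rw [erealPos_nonpos h1, ENNReal.ofReal_eq_zero]
          have hsle : (φ y) ⊔ ((-(M : ℝ) : ℝ) : EReal) ≤ 0 := by
            apply sup_le h1
            exact EReal.coe_nonpos.mpr (neg_nonpos.mpr (Nat.cast_nonneg M))
          have hst : (φ y) ⊔ ((-(M : ℝ) : ℝ) : EReal) ≠ ⊤ := ne_top_of_le_ne_top (by simp) hsle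
          rcases eq_or_ne ((φ y) ⊔ ((-(M : ℝ) : ℝ) : EReal)) ⊥ with hb | hb
          · show ((φ y) ⊔ ((-(M : ℝ) : ℝ) : EReal)).toReal ≤ 0
            rw [hb]; simp
          · show ((φ y) ⊔ ((-(M : ℝ) : ℝ) : EReal)).toReal ≤ 0
            have := EReal.toReal_le_toReal hsle hb (by simp)
            simpa using this
        · have hsup : (φ y) ⊔ ((-(M : ℝ) : ℝ) : EReal) = φ y := by
            apply sup_eq_left.mpr
            refine le_trans ?_ h1
            exact EReal.coe_nonpos.mpr (neg_nonpos.mpr (Nat.cast_nonneg M))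
          show ENNReal.ofReal (((φ y) ⊔ ((-(M : ℝ) : ℝ) : EReal)).toReal) = erealPos (φ y)
          rw [hsup, erealPos_eq_ofReal hy']
      have e2 : ∫⁻ y, ENNReal.ofReal (-ψ M y) ∂μ = NM M := by
        apply lintegral_congr_ae
        filter_upwards [hne] with y hy
        show ENNReal.ofReal (-ψ M y) = erealPos (-(φ y)) ⊓ ENNReal.ofReal (M:ℝ)
        have hy' : φ y ≠ ⊤ := hy
        set s : EReal := (φ y) ⊔ ((-(M : ℝ) : ℝ) : EReal) with hs
        have hsb : s ≠ ⊥ := by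
          intro h
          have := le_sup_right (a := φ y) (b := ((-(M : ℝ) : ℝ) : EReal))
          rw [← hs, h, le_bot_iff] at this
          exact EReal.coe_ne_bot _ this
        have h1 : -ψ M y = (-s).toReal := by
          show -(s.toReal) = (-s).toReal
          rw [EReal.toReal_neg_eq]
        have h2 : -s = (-(φ y)) ⊓ ((M : ℝ) : EReal) := by
          rw [hs, EReal.neg_sup']
          congr 1
          rw [← EReal.coe_neg, neg_neg]
        have h3 : -s ≠ ⊤ := by
          rw [h2]
          exact ne_top_of_le_ne_top (EReal.coe_ne_top _) (min_le_right _ _)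
        rw [h1, ← erealPos_eq_ofReal h3, h2]
        have h4 : erealPos ((-(φ y)) ⊓ ((M : ℝ) : EReal))
            = erealPos (-(φ y)) ⊓ erealPos ((M : ℝ) : EReal) := erealPos_mono.map_min
        rw [h4, erealPos_coe]
      rw [integral_eq_lintegral_pos_part_sub_lintegral_neg_part (hψint M), e1, e2]
    have hsupN : ⨆ M : ℕ, NM M = Nneg := by
      rw [hNM, hNneg, ← lintegral_iSup]
      · apply lintegral_congr
        intro y
        exact iSup_min_ofReal_nat _
      · intro M
        exact (measurable_erealPos.comp hφ.neg).min measurable_const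
      · intro M1 M2 hM
        intro y
        exact min_le_min (le_refl _) (ENNReal.ofReal_le_ofReal (by exact_mod_cast hM))
    have hPfin : Ppos ≠ ⊤ := hpos
    have hgoal : eIntegral μ φ = ((Ppos : ENNReal) : EReal) - ((Nneg : ENNReal) : EReal) := rfl
    rw [hgoal]
    rcases eq_or_ne Nneg ⊤ with hNt | hNt
    · rw [hNt, EReal.coe_ennreal_top, EReal.sub_top']
      rw [le_bot_iff]
      apply EReal.eq_bot_of_forall_real
      intro b
      have hlt : ENNReal.ofReal (Ppos.toReal - b) < ⨆ M, NM M := by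
        rw [hsupN, hNt]; exact ENNReal.ofReal_lt_top
      obtain ⟨M, hM⟩ := lt_iSup_iff.mp hlt
      refine le_trans (iInf_le _ M) ?_
      rw [hintψ M, EReal.coe_le_coe_iff]
      have h2 : Ppos.toReal - b ≤ (NM M).toReal := by
        rcases le_or_gt (Ppos.toReal - b) 0 with h3 | h3
        · exact le_trans h3 ENNReal.toReal_nonneg
        · exact (ENNReal.ofReal_le_iff_le_toReal (hNMfin M)).mp hM.le
      linarith
    · rw [coe_ennreal_eq_coe_toReal hPfin, coe_ennreal_eq_coe_toReal hNt, ← EReal.coe_sub]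
      apply EReal.le_coe_of_forall_add
      intro ε hε
      obtain ⟨M, hM⟩ := exists_iSup_le_add NM (hsupN ▸ hNt) hε
      rw [hsupN] at hM
      refine le_trans (iInf_le _ M) ?_
      rw [hintψ M, EReal.coe_le_coe_iff]
      have h1 : Nneg.toReal ≤ (NM M).toReal + ε := by
        have := ENNReal.toReal_mono (ENNReal.add_ne_top.mpr ⟨hNMfin M, ENNReal.ofReal_ne_top⟩) hM
        rwa [ENNReal.toReal_add (hNMfin M) ENNReal.ofReal_ne_top,
          ENNReal.toReal_ofReal hε.le] at this
      linarith
  -- combine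
  have hAE := ae_all_iff.mpr hrealM
  filter_upwards [hnull, hAE] with y hy1 hy2
  have hcomp : ∀ M : ℕ, limsup
      (fun n : ℕ => (((n : ℝ)⁻¹ : ℝ) : EReal) * ∑ i ∈ Finset.range n, φ (T^[i] y)) atTop
        ≤ ((∫ y, ψ M y ∂μ : ℝ) : EReal) := by
    intro M
    refine le_trans ?_ (hy2 M)
    have hev : ∀ n : ℕ, (((n : ℝ)⁻¹ : ℝ) : EReal) * ∑ i ∈ Finset.range n, φ (T^[i] y)
        ≤ (((n : ℝ)⁻¹ * birkS T (ψ M) n y : ℝ) : EReal) := by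
      intro n
      have hsum : ∑ i ∈ Finset.range n, φ (T^[i] y) ≤ ((birkS T (ψ M) n y : ℝ) : EReal) := by
        have hb : ((birkS T (ψ M) n y : ℝ) : EReal)
            = ∑ i ∈ Finset.range n, ((ψ M (T^[i] y) : ℝ) : EReal) :=
          EReal.coe_finset_sum (fun i => ψ M (T^[i] y))
        rw [hb]
        apply Finset.sum_le_sum
        intro i _
        set v := T^[i] y with hv
        set s : EReal := (φ v) ⊔ ((-(M : ℝ) : ℝ) : EReal) with hs
        have hsb : s ≠ ⊥ := by
          intro h
          have h2 := le_sup_right (a := φ v) (b := ((-(M : ℝ) : ℝ) : EReal))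
          rw [← hs, h, le_bot_iff] at h2
          exact EReal.coe_ne_bot _ h2
        have hst : s ≠ ⊤ := by
          rw [hs]
          rcases le_total (φ v) ((-(M : ℝ) : ℝ) : EReal) with h | h
          · rw [sup_eq_right.mpr h]; exact EReal.coe_ne_top _
          · rw [sup_eq_left.mpr h]; exact hy1 i
        show φ v ≤ ((s.toReal : ℝ) : EReal)
        rw [EReal.coe_toReal hst hsb]
        exact le_sup_left
      calc (((n : ℝ)⁻¹ : ℝ) : EReal) * ∑ i ∈ Finset.range n, φ (T^[i] y)
          ≤ (((n : ℝ)⁻¹ : ℝ) : EReal) * ((birkS T (ψ M) n y : ℝ) : EReal) :=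
            mul_le_mul_of_nonneg_left hsum (EReal.coe_nonneg.mpr (inv_nonneg.mpr (Nat.cast_nonneg n)))
      _ = (((n : ℝ)⁻¹ * birkS T (ψ M) n y : ℝ) : EReal) := (EReal.coe_mul _ _).symm
    exact limsup_le_limsup (Eventually.of_forall hev)
  exact le_trans (le_iInf hcomp) hfin

end ERealHB

section Nbhd

lemma nbhd_bound {d : ℕ} {Θ : Set (Fin d → ℝ)} (hΘ : IsCompact Θ)
    (f : (Fin d → ℝ) → (ℕ → ℝ) → EReal)
    (husc : ∀ x : ℕ → ℝ, UpperSemicontinuousOn (fun θ => f θ x) Θ)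
    (hsupmeas : ∀ C : Set (Fin d → ℝ), C ⊆ Θ → IsCompact C →
      Measurable fun x : ℕ → ℝ => sSup ((fun θ => f θ x) '' C))
    {Ω : Type*} [MeasurableSpace Ω] (P : Measure Ω) [IsProbabilityMeasure P]
    (X : Ω → ℕ → ℝ) (hX : Measurable X)
    (hint : ∫⁻ ω, erealPos (sSup ((fun θ => f θ (X ω)) '' Θ)) ∂P ≠ ⊤)
    {θ₀ : Fin d → ℝ} (hθ₀ : θ₀ ∈ Θ) {b : EReal}
    (hb : eIntegral P (fun ω => f θ₀ (X ω)) < b) :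
    ∃ k : ℕ, eIntegral P (fun ω =>
      sSup ((fun θ => f θ (X ω)) '' (Θ ∩ Metric.closedBall θ₀ (1/(k+1))))) < b := by
  set C : ℕ → Set (Fin d → ℝ) := fun k => Θ ∩ Metric.closedBall θ₀ (1/(k+1)) with hC
  have hCsub : ∀ k, C k ⊆ Θ := fun k => Set.inter_subset_left
  have hCcpt : ∀ k, IsCompact (C k) := fun k => hΘ.inter_right Metric.isClosed_closedBall
  set g : ℕ → (ℕ → ℝ) → EReal := fun k x => sSup ((fun θ => f θ x) '' C k) with hg
  have hCanti : Antitone C := by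
    intro j k hjk
    apply Set.inter_subset_inter_right
    apply Metric.closedBall_subset_closedBall
    have h1 : (0:ℝ) < j + 1 := by positivity
    apply one_div_le_one_div_of_le h1
    exact_mod_cast Nat.add_le_add_right hjk 1
  have hanti : ∀ x, Antitone (fun k => g k x) := by
    intro x j k hjk
    exact sSup_le_sSup (Set.image_mono (hCanti hjk))
  have hgmeas : ∀ k, Measurable (g k) := fun k => hsupmeas (C k) (hCsub k) (hCcpt k)
  have hinf : ∀ x, (⨅ k, g k x) = f θ₀ x := by
    intro x
    apply le_antisymm
    · apply Aux.EReal.le_of_forall_real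
      intro r hr
      have hev := husc x θ₀ hθ₀ (r : EReal) hr
      obtain ⟨ε, hε, hball⟩ := Metric.mem_nhdsWithin_iff.mp hev
      obtain ⟨k, hk⟩ := exists_nat_one_div_lt hε
      refine le_trans (iInf_le _ k) ?_
      apply sSup_le
      rintro y ⟨θ, hθ, rfl⟩
      have hθball : θ ∈ Metric.ball θ₀ ε ∩ Θ := by
        constructor
        · have := hθ.2
          rw [Metric.mem_closedBall] at this
          rw [Metric.mem_ball]
          calc dist θ θ₀ ≤ 1/(k+1) := by exact_mod_cast this
          _ < ε := by exact_mod_cast hk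
        · exact hθ.1
      exact le_of_lt (hball hθball)
    · apply le_iInf
      intro k
      apply le_sSup
      exact ⟨θ₀, ⟨hθ₀, Metric.mem_closedBall_self (by positivity)⟩, rfl⟩
  have h0 : ∫⁻ ω, erealPos (g 0 (X ω)) ∂P ≠ ⊤ := by
    refine ne_top_of_le_ne_top hint (lintegral_mono fun ω => erealPos_mono ?_)
    exact sSup_le_sSup (Set.image_mono (hCsub 0))
  have hkey := eIntegral_iInf_le (μ := P) (g := fun k ω => g k (X ω))
    (fun k => (hgmeas k).comp hX) (fun ω => hanti (X ω)) h0
  have heq : (fun ω => ⨅ k, g k (X ω)) = fun ω => f θ₀ (X ω) := funext fun ω => hinf (X ω)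
  rw [heq] at hkey
  have hlt : ⨅ k, eIntegral P (fun ω => g k (X ω)) < b := lt_of_le_of_lt hkey hb
  exact iInf_lt_iff.mp hlt

end Nbhd
end Aux

open Aux

/-- Pfanzagl-type lemma: for a family `{f_θ, θ ∈ Θ}` (Θ ⊂ ℝ^d compact) of
Borel functions `ℝ^∞ → [−∞,∞]` which is upper-semicontinuous in `θ`, with measurable
compact suprema, and with `E sup_{θ∈Θ} f_θ(X) < ∞`, we have:
(a) `θ ↦ E f_θ(X)` is upper-semicontinuous, and
(b) for any ergodic stationary process `{X_t}` with marginals distributed as `X`,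
`limsup_n sup_{θ∈C} n⁻¹ ∑_{i=1}^n f_θ(X_i) ≤ sup_{θ∈C} E f_θ(X₁)` a.s.,
for every compact `C ⊆ Θ`. -/
theorem stmt9 {Ω : Type*} [MeasurableSpace Ω] (P : Measure Ω) [IsProbabilityMeasure P]
    (d : ℕ) (Θ : Set (Fin d → ℝ)) (hΘ : IsCompact Θ)
    (f : (Fin d → ℝ) → (ℕ → ℝ) → EReal)
    (hfmeas : ∀ θ, Measurable (f θ))
    (husc : ∀ x : ℕ → ℝ, UpperSemicontinuousOn (fun θ => f θ x) Θ)
    (hsupmeas : ∀ C : Set (Fin d → ℝ), C ⊆ Θ → IsCompact C →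
      Measurable fun x : ℕ → ℝ => sSup ((fun θ => f θ x) '' C))
    (X : Ω → ℕ → ℝ) (hX : Measurable X)
    (hint : ∫⁻ ω, erealPos (sSup ((fun θ => f θ (X ω)) '' Θ)) ∂P < ⊤) :
    UpperSemicontinuousOn (fun θ => eIntegral P fun ω => f θ (X ω)) Θ ∧
    ∀ Xseq : ℤ → Ω → ℕ → ℝ, (∀ t, Measurable (Xseq t)) →
      Ergodic (fun x : ℤ → ℕ → ℝ => fun t => x (t + 1))
        (Measure.map (fun ω => fun t : ℤ => Xseq t ω) P) →
      (∀ t, Measure.map (Xseq t) P = Measure.map X P) →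
      ∀ C : Set (Fin d → ℝ), C ⊆ Θ → IsCompact C →
        ∀ᵐ ω ∂P,
          Filter.limsup
            (fun n : ℕ => sSup ((fun θ =>
              (((n : ℝ)⁻¹ : ℝ) : EReal) * ∑ i ∈ Finset.range n, f θ (Xseq (i + 1) ω)) '' C))
            atTop ≤
          sSup ((fun θ => eIntegral P fun ω' => f θ (Xseq 1 ω')) '' C) := by
  have hint' : ∫⁻ ω, erealPos (sSup ((fun θ => f θ (X ω)) '' Θ)) ∂P ≠ ⊤ := hint.ne
  constructor
  · intro θ₀ hθ₀ b hb
    obtain ⟨k, hk⟩ := nbhd_bound hΘ f husc hsupmeas P X hX hint' hθ₀ hb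
    have hnb : Θ ∩ Metric.closedBall θ₀ (1/(k+1)) ∈ 𝓝[Θ] θ₀ :=
      Filter.inter_mem self_mem_nhdsWithin
        (mem_nhdsWithin_of_mem_nhds (Metric.closedBall_mem_nhds θ₀ (by positivity)))
    filter_upwards [hnb] with θ hθ
    exact lt_of_le_of_lt
      (eIntegral_mono fun ω => le_sSup (Set.mem_image_of_mem (fun θ' => f θ' (X ω)) hθ)) hk
  · intro Xseq hXseqM hErg hLaw C hCΘ hCcpt
    rcases Set.eq_empty_or_nonempty C with rfl | hCne
    · apply ae_of_all
      intro ω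
      simp [Filter.limsup_const]
    have hlint : ∀ (h : (ℕ → ℝ) → ENNReal), Measurable h →
        ∫⁻ ω, h (Xseq 1 ω) ∂P = ∫⁻ ω, h (X ω) ∂P := by
      intro h hm
      rw [← lintegral_map hm (hXseqM 1), hLaw 1, lintegral_map hm hX]
    have hlawint : ∀ θ, (eIntegral P fun ω' => f θ (Xseq 1 ω')) = eIntegral P fun ω => f θ (X ω) := by
      intro θ
      have e1 := hlint (fun x => erealPos (f θ x)) (measurable_erealPos.comp (hfmeas θ))
      have e2 := hlint (fun x => erealPos (-(f θ x))) (measurable_erealPos.comp (hfmeas θ).neg)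
      beta_reduce at e1 e2
      unfold eIntegral
      rw [e1, e2]
    have hRHS : (fun θ => eIntegral P fun ω' => f θ (Xseq 1 ω'))
        = fun θ => eIntegral P fun ω => f θ (X ω) := funext hlawint
    rw [hRHS]
    set I : (Fin d → ℝ) → EReal := fun θ => eIntegral P fun ω => f θ (X ω) with hI
    set s : EReal := sSup (I '' C) with hs
    rcases eq_or_ne s ⊤ with hstop | hstop
    · apply ae_of_all
      intro ω
      rw [hstop]
      exact le_top
    have hMAIN : ∀ q : ℚ, s < ((q : ℝ) : EReal) → ∀ᵐ ω ∂P,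
        Filter.limsup
            (fun n : ℕ => sSup ((fun θ =>
              (((n : ℝ)⁻¹ : ℝ) : EReal) * ∑ i ∈ Finset.range n, f θ (Xseq (i + 1) ω)) '' C))
            atTop ≤ ((q : ℝ) : EReal) := by
      intro q hsq
      have hchoice : ∀ θ : Fin d → ℝ, ∃ k : ℕ, θ ∈ C →
          eIntegral P (fun ω =>
            sSup ((fun θ' => f θ' (X ω)) '' (Θ ∩ Metric.closedBall θ (1/(k+1)))))
            < ((q : ℝ) : EReal) := by
        intro θ
        by_cases hθ : θ ∈ C
        · obtain ⟨k, hk⟩ := nbhd_bound hΘ f husc hsupmeas P X hX hint' (hCΘ hθ)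
            (lt_of_le_of_lt (le_sSup (Set.mem_image_of_mem I hθ)) hsq)
          exact ⟨k, fun _ => hk⟩
        · exact ⟨0, fun h => absurd h hθ⟩
      choose kk hkk using hchoice
      set G : (Fin d → ℝ) → (ℕ → ℝ) → EReal := fun θ x =>
        sSup ((fun θ' => f θ' x) '' (Θ ∩ Metric.closedBall θ (1/(kk θ + 1)))) with hG
      have hGmeas : ∀ θ, Measurable (G θ) := fun θ =>
        hsupmeas _ Set.inter_subset_left (hΘ.inter_right Metric.isClosed_closedBall)
      have hGle : ∀ θ x, G θ x ≤ sSup ((fun θ' => f θ' x) '' Θ) := fun θ x =>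
        sSup_le_sSup (Set.image_mono Set.inter_subset_left)
      obtain ⟨t, htC, htcover⟩ := hCcpt.elim_nhds_subcover
        (fun θ => Metric.ball θ (1/(kk θ + 1))) (fun θ _ => Metric.ball_mem_nhds θ (by positivity))
      have hcover : ∀ θ ∈ C, ∃ j ∈ t, ∀ x, f θ x ≤ G j x := by
        intro θ hθ
        obtain ⟨j, hjt, hj⟩ := Set.mem_iUnion₂.mp (htcover hθ)
        exact ⟨j, hjt, fun x => le_sSup ⟨θ, ⟨hCΘ hθ, Metric.ball_subset_closedBall hj⟩, rfl⟩⟩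
      have hπ : Measurable (fun ω => fun t : ℤ => Xseq t ω) := measurable_pi_lambda _ hXseqM
      set μp : Measure (ℤ → ℕ → ℝ) := Measure.map (fun ω => fun t : ℤ => Xseq t ω) P with hμp
      haveI : IsProbabilityMeasure μp := Measure.isProbabilityMeasure_map hπ.aemeasurable
      set T : (ℤ → ℕ → ℝ) → (ℤ → ℕ → ℝ) := fun x : ℤ → ℕ → ℝ => fun t => x (t + 1) with hT
      have hiter : ∀ (i : ℕ) (y : ℤ → ℕ → ℝ) (r : ℤ), (T^[i] y) r = y (r + i) := by
        intro i
        induction i with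
        | zero => intro y r; simp
        | succ i ih =>
          intro y r
          rw [Function.iterate_succ_apply, ih (T y) r]
          show y (r + i + 1) = y (r + (i + 1))
          congr 1
          push_cast
          ring
      have hlintp : ∀ (h : (ℕ → ℝ) → ENNReal), Measurable h →
          ∫⁻ y, h (y 1) ∂μp = ∫⁻ ω, h (X ω) ∂P := by
        intro h hm
        have e := lintegral_map (f := fun y : ℤ → ℕ → ℝ => h (y 1))
          (g := fun ω => fun t : ℤ => Xseq t ω) (μ := P) (hm.comp (measurable_pi_apply 1)) hπ
        beta_reduce at e
        rw [hμp, e]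
        exact hlint h hm
      have hperj : ∀ j, j ∈ t → j ∈ C → ∀ᵐ ω ∂P,
          Filter.limsup (fun n : ℕ => (((n : ℝ)⁻¹ : ℝ) : EReal)
            * ∑ i ∈ Finset.range n, G j (Xseq (i + 1) ω)) atTop < ((q : ℝ) : EReal) := by
        intro j hjt hjC
        set φ : (ℤ → ℕ → ℝ) → EReal := fun y => G j (y 1) with hφ
        have hφm : Measurable φ := (hGmeas j).comp (measurable_pi_apply 1)
        have e1 := hlintp (fun x => erealPos (G j x)) (measurable_erealPos.comp (hGmeas j))
        have e2 := hlintp (fun x => erealPos (-(G j x))) (measurable_erealPos.comp (hGmeas j).neg)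
        beta_reduce at e1 e2
        have hpos : ∫⁻ y, erealPos (φ y) ∂μp ≠ ⊤ := by
          simp only [hφ]
          rw [e1]
          exact ne_top_of_le_ne_top hint' (lintegral_mono fun ω => erealPos_mono (hGle j (X ω)))
        have heI : eIntegral μp φ = eIntegral P (fun ω => G j (X ω)) := by
          unfold eIntegral
          simp only [hφ]
          rw [e1, e2]
        have hbk := ereal_halfBirkhoff hErg hφm hpos
        have hae2 := ae_of_ae_map hπ.aemeasurable hbk
        filter_upwards [hae2] with ω hω
        have heqfun : (fun n : ℕ => (((n : ℝ)⁻¹ : ℝ) : EReal)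
              * ∑ i ∈ Finset.range n, G j (Xseq (i + 1) ω))
            = fun n : ℕ => (((n : ℝ)⁻¹ : ℝ) : EReal)
              * ∑ i ∈ Finset.range n, φ (T^[i] (fun t : ℤ => Xseq t ω)) := by
          funext n
          congr 1
          apply Finset.sum_congr rfl
          intro i _
          simp only [hφ]
          rw [hiter i _ 1]
          show G j (Xseq (↑i + 1) ω) = G j (Xseq (1 + ↑i) ω)
          have hidx : (1 + (i : ℤ)) = (i : ℤ) + 1 := add_comm (1 : ℤ) (i : ℤ)
          rw [hidx]
        rw [heqfun]
        calc Filter.limsup (fun n : ℕ => (((n : ℝ)⁻¹ : ℝ) : EReal)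
              * ∑ i ∈ Finset.range n, φ (T^[i] (fun t : ℤ => Xseq t ω))) atTop
            ≤ eIntegral μp φ := hω
        _ = eIntegral P (fun ω => G j (X ω)) := heI
        _ < ((q : ℝ) : EReal) := hkk j hjC
      have hallj : ∀ᵐ ω ∂P, ∀ j ∈ (t : Set (Fin d → ℝ)),
          Filter.limsup (fun n : ℕ => (((n : ℝ)⁻¹ : ℝ) : EReal)
            * ∑ i ∈ Finset.range n, G j (Xseq (i + 1) ω)) atTop < ((q : ℝ) : EReal) := by
        rw [ae_ball_iff t.countable_toSet]
        intro j hjt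
        exact hperj j hjt (htC j hjt)
      filter_upwards [hallj] with ω hω
      have hev : ∀ᶠ n : ℕ in atTop, ∀ j ∈ t,
          (((n : ℝ)⁻¹ : ℝ) : EReal) * ∑ i ∈ Finset.range n, G j (Xseq (i + 1) ω)
            < ((q : ℝ) : EReal) := by
        rw [Filter.eventually_all_finset]
        intro j hjt
        exact Filter.eventually_lt_of_limsup_lt (hω j hjt)
      apply Filter.limsup_le_of_le
      · isBoundedDefault
      · filter_upwards [hev] with n hn
        apply sSup_le
        rintro y ⟨θ, hθ, rfl⟩
        obtain ⟨j, hjt, hle⟩ := hcover θ hθ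
        refine le_trans ?_ (hn j hjt).le
        apply mul_le_mul_of_nonneg_left ?_ (EReal.coe_nonneg.mpr (inv_nonneg.mpr (Nat.cast_nonneg n)))
        exact Finset.sum_le_sum (fun i _ => hle _)
    have hall : ∀ᵐ ω ∂P, ∀ q : ℚ, s < ((q : ℝ) : EReal) →
        Filter.limsup
            (fun n : ℕ => sSup ((fun θ =>
              (((n : ℝ)⁻¹ : ℝ) : EReal) * ∑ i ∈ Finset.range n, f θ (Xseq (i + 1) ω)) '' C))
            atTop ≤ ((q : ℝ) : EReal) := by
      rw [ae_all_iff]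
      intro q
      by_cases hsq : s < ((q : ℝ) : EReal)
      · filter_upwards [hMAIN q hsq] with ω h _
        exact h
      · exact ae_of_all _ (fun ω h => absurd h hsq)
    filter_upwards [hall] with ω hω
    by_contra hc
    push_neg at hc
    obtain ⟨y, hy1, hy2⟩ := EReal.exists_between_coe_real hc
    obtain ⟨z, hz1, hz2⟩ := EReal.exists_between_coe_real hy1
    have hzy : z < y := by exact_mod_cast hz2
    obtain ⟨q, hq1, hq2⟩ := exists_rat_btwn hzy
    have h1 := hω q (lt_trans hz1 (by exact_mod_cast hq1))
    have h2 : ((q : ℝ) : EReal) < _ := lt_trans (show ((q:ℝ):EReal) < ((y:ℝ):EReal) by exact_mod_cast hq2) hy2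
    exact absurd h1 (not_le.mpr h2)
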